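/- For each r ≥ 0, the number of ordinals α < ω^{r+1} with N(α) = n equals the number of solutions in nonnegative integers (l_r, …, l_0) of (r+1)·l_r + r·l_{r-1} + ⋯ + 1·l_0 = n; in other words, c_{ω^{r+1}}(n) is the number of partitions of n into parts of size at most r+1. -/

import Mathlib

open Ordinal

/-- `ε₀` is the least ordinal `ξ` with `ω ^ ξ = ξ`. -/
noncomputable def eps0 : Ordinal := sInf {ξ : Ordinal | omega0 ^ ξ = ξ}

/-- `N` is the norm function on ordinals below `ε₀`: `N 0 = 0` and
`N (ω^e + b) = 1 + N e + N b` when `ω^e + b` is in Cantor normal form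
(i.e. `b < ω^(e+1)`).  Thus `N α` is the number of occurrences of `ω` in the
hereditary Cantor normal form of `α`. -/
def IsNorm (N : Ordinal → ℕ) : Prop :=
  N 0 = 0 ∧
    ∀ e b : Ordinal, omega0 ^ e + b < eps0 → b < omega0 ^ (e + 1) →
      N (omega0 ^ e + b) = 1 + N e + N b

lemma eps0_fix : omega0 ^ eps0 = eps0 := by
  have h : eps0 ∈ {ξ : Ordinal | omega0 ^ ξ = ξ} :=
    csInf_mem ⟨nfp (omega0 ^ ·) 0, Ordinal.nfp_fp (isNormal_opow one_lt_omega0) 0⟩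
  exact h

lemma omega0_opow_omega0_le_eps0 : omega0 ^ omega0 ≤ eps0 := by
  have h0 : eps0 ≠ 0 := by
    intro h
    have := eps0_fix
    rw [h, opow_zero] at this
    exact one_ne_zero this
  have h1 : omega0 ≤ eps0 := by
    have : omega0 ^ (1 : Ordinal) ≤ omega0 ^ eps0 :=
      opow_le_opow_right omega0_pos (Ordinal.one_le_iff_ne_zero.2 h0)
    rwa [opow_one, eps0_fix] at this
  calc omega0 ^ omega0 ≤ omega0 ^ eps0 := opow_le_opow_right omega0_pos h1
    _ = eps0 := eps0_fix

lemma lt_eps0_of_lt_opow_nat {a : Ordinal} {k : ℕ} (h : a < omega0 ^ (k : Ordinal)) :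
    a < eps0 :=
  lt_of_lt_of_le (h.trans_le (opow_le_opow_right omega0_pos (nat_lt_omega0 k).le))
    omega0_opow_omega0_le_eps0

lemma N_nat (N : Ordinal → ℕ) (hN : IsNorm N) (k : ℕ) : N (k : Ordinal) = k := by
  induction k with
  | zero => simpa using hN.1
  | succ k ih =>
    have hcast : ((k + 1 : ℕ) : Ordinal) = omega0 ^ (0 : Ordinal) + (k : Ordinal) := by
      rw [opow_zero]
      norm_cast
      omega
    have h1 : omega0 ^ (0 : Ordinal) + (k : Ordinal) < eps0 := by
      rw [← hcast]
      exact lt_eps0_of_lt_opow_nat (k := 1) (by rw [Nat.cast_one, opow_one]; exact nat_lt_omega0 _)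
    have h2 : (k : Ordinal) < omega0 ^ ((0 : Ordinal) + 1) := by
      rw [zero_add, opow_one]; exact nat_lt_omega0 k
    rw [hcast, hN.2 0 k h1 h2, hN.1, ih]
    omega

lemma mul_nat_add_lt {i m : ℕ} {b : Ordinal} (hb : b < omega0 ^ (i : Ordinal)) :
    omega0 ^ (i : Ordinal) * (m : Ordinal) + b < omega0 ^ ((i : Ordinal) + 1) := by
  rw [add_one_eq_succ]
  exact opow_mul_add_lt_opow (nat_lt_omega0 m) hb (Order.lt_succ _)

lemma N_mul_add (N : Ordinal → ℕ) (hN : IsNorm N) (i m : ℕ) {b : Ordinal}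
    (hb : b < omega0 ^ (i : Ordinal)) :
    N (omega0 ^ (i : Ordinal) * (m : Ordinal) + b) = (i + 1) * m + N b := by
  induction m with
  | zero => simp
  | succ m ih =>
    have key : omega0 ^ (i : Ordinal) * ((m + 1 : ℕ) : Ordinal) + b
        = omega0 ^ (i : Ordinal) + (omega0 ^ (i : Ordinal) * (m : Ordinal) + b) := by
      have h1 : ((m + 1 : ℕ) : Ordinal) = 1 + (m : Ordinal) := by norm_cast; omega
      rw [h1, mul_add, mul_one, add_assoc]
    have hlt : omega0 ^ (i : Ordinal) * ((m + 1 : ℕ) : Ordinal) + b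
        < omega0 ^ ((i : Ordinal) + 1) := mul_nat_add_lt hb
    have heps : omega0 ^ (i : Ordinal) + (omega0 ^ (i : Ordinal) * (m : Ordinal) + b)
        < eps0 := by
      rw [← key]
      refine lt_eps0_of_lt_opow_nat (k := i + 1) ?_
      rwa [Nat.cast_add, Nat.cast_one]
    have hsmall : omega0 ^ (i : Ordinal) * (m : Ordinal) + b
        < omega0 ^ ((i : Ordinal) + 1) := mul_nat_add_lt hb
    rw [key, hN.2 (i : Ordinal) _ heps hsmall, N_nat N hN, ih]
    ring

/-- pack the coefficient vector `l` into the ordinal `ω^r·l_r + ⋯ + ω^0·l_0`. -/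
noncomputable def pack : ∀ r : ℕ, (Fin (r + 1) → ℕ) → Ordinal
  | 0, l => (l 0 : Ordinal)
  | r + 1, l => omega0 ^ ((r : Ordinal) + 1) * (l (Fin.last (r + 1)) : Ordinal)
      + pack r (fun i => l i.castSucc)

lemma pack_lt : ∀ (r : ℕ) (l : Fin (r + 1) → ℕ), pack r l < omega0 ^ ((r : Ordinal) + 1)
  | 0, l => by
    rw [pack]
    simp only [Nat.cast_zero, zero_add, opow_one]
    exact nat_lt_omega0 _
  | r + 1, l => by
    rw [pack]
    have h : ((r + 1 : ℕ) : Ordinal) + 1 = Order.succ ((r : Ordinal) + 1) := by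
      rw [← add_one_eq_succ]; push_cast; ring
    rw [h]
    exact opow_mul_add_lt_opow (nat_lt_omega0 _) (pack_lt r _) (Order.lt_succ _)

lemma pack_N (N : Ordinal → ℕ) (hN : IsNorm N) :
    ∀ (r : ℕ) (l : Fin (r + 1) → ℕ), N (pack r l) = ∑ i, (i.1 + 1) * l i
  | 0, l => by
    rw [pack, N_nat N hN, Fin.sum_univ_one]
    simp
  | r + 1, l => by
    rw [pack]
    have hcast : ((r : Ordinal) + 1) = ((r + 1 : ℕ) : Ordinal) := by norm_cast
    have hb : pack r (fun i => l i.castSucc) < omega0 ^ ((r + 1 : ℕ) : Ordinal) := by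
      rw [← hcast]; exact pack_lt r _
    have hsum : ∑ i : Fin (r + 1 + 1), (i.1 + 1) * l i
        = (∑ i : Fin (r + 1), (i.1 + 1) * l i.castSucc)
          + (r + 2) * l (Fin.last (r + 1)) := by
      rw [Fin.sum_univ_castSucc]
      simp
    rw [hcast, N_mul_add N hN (r + 1) _ hb, pack_N N hN r, hsum]
    ring

lemma pack_inj : ∀ (r : ℕ) (l₁ l₂ : Fin (r + 1) → ℕ), pack r l₁ = pack r l₂ → l₁ = l₂
  | 0, l₁, l₂, h => by
    rw [pack, pack, Nat.cast_inj] at h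
    funext i
    have hi : i = 0 := Fin.ext (by omega)
    rw [hi, h]
  | r + 1, l₁, l₂, h => by
    rw [pack, pack] at h
    set Ω := omega0 ^ ((r : Ordinal) + 1) with hΩ
    have hne : Ω ≠ 0 := (opow_pos _ omega0_pos).ne'
    have hdiv := congrArg (· / Ω) h
    simp only [mul_add_div _ hne, (div_eq_zero_of_lt (pack_lt r (fun i => l₁ i.castSucc)) :
        pack r (fun i => l₁ i.castSucc) / Ω = 0),
      (div_eq_zero_of_lt (pack_lt r (fun i => l₂ i.castSucc)) :
        pack r (fun i => l₂ i.castSucc) / Ω = 0), add_zero,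
      Nat.cast_inj] at hdiv
    have hb : pack r (fun i => l₁ i.castSucc) = pack r (fun i => l₂ i.castSucc) := by
      rw [hdiv] at h
      exact (add_right_inj _).1 h
    have htail := pack_inj r _ _ hb
    funext i
    induction i using Fin.lastCases with
    | last => exact hdiv
    | cast i => exact congrFun htail i

lemma pack_surj : ∀ (r : ℕ) (α : Ordinal), α < omega0 ^ ((r : Ordinal) + 1) →
    ∃ l : Fin (r + 1) → ℕ, pack r l = α
  | 0, α, hα => by
    rw [Nat.cast_zero, zero_add, opow_one] at hα
    obtain ⟨k, rfl⟩ := lt_omega0.1 hα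
    exact ⟨fun _ => k, rfl⟩
  | r + 1, α, hα => by
    set Ω := omega0 ^ ((r : Ordinal) + 1) with hΩ
    have hne : Ω ≠ 0 := (opow_pos _ omega0_pos).ne'
    have hα' : α < Ω * omega0 := by
      have : ((r + 1 : ℕ) : Ordinal) + 1 = Order.succ ((r : Ordinal) + 1) := by
        rw [← add_one_eq_succ]; push_cast; ring
      rw [this, opow_succ] at hα
      exact hα
    have hdiv : α / Ω < omega0 := (div_lt hne).2 hα'
    obtain ⟨m, hm⟩ := lt_omega0.1 hdiv
    obtain ⟨l', hl'⟩ := pack_surj r (α % Ω) (mod_lt α hne)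
    refine ⟨Fin.lastCases m l', ?_⟩
    rw [pack]
    have h1 : (Fin.lastCases m l' (Fin.last (r + 1)) : ℕ) = m := by
      simp
    have h2 : (fun i : Fin (r + 1) => Fin.lastCases (motive := fun _ => ℕ) m l' i.castSucc)
        = l' := by
      funext i; simp
    rw [h1, h2, hl', ← hm, div_add_mod]

open Multiset in
lemma count_pack_multiset {r : ℕ} (l : Fin (r + 1) → ℕ) (i : Fin (r + 1)) :
    Multiset.count (i.1 + 1) (∑ j : Fin (r + 1), Multiset.replicate (l j) (j.1 + 1)) = l i := by
  rw [Multiset.count_sum']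
  rw [Finset.sum_eq_single i]
  · rw [Multiset.count_replicate, if_pos rfl]
  · intro j _ hj
    rw [Multiset.count_replicate, if_neg]
    intro hc
    exact hj (Fin.ext (by omega))
  · simp

open Multiset in
lemma multiset_eq_sum_replicate {r n : ℕ} (p : n.Partition)
    (hp : ∀ x ∈ p.parts, x ≤ r + 1) :
    (∑ j : Fin (r + 1), Multiset.replicate (p.parts.count (j.1 + 1)) (j.1 + 1)) = p.parts := by
  ext a
  rw [Multiset.count_sum']
  by_cases ha : 1 ≤ a ∧ a ≤ r + 1
  · have hlt : a - 1 < r + 1 := by omega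
    rw [Finset.sum_eq_single (⟨a - 1, hlt⟩ : Fin (r + 1))]
    · rw [Multiset.count_replicate, if_pos (by simp only [Fin.val_mk]; omega)]
      congr 1
      simp only [Fin.val_mk]
      omega
    · intro j _ hj
      rw [Multiset.count_replicate, if_neg]
      intro hc
      exact hj (Fin.ext (by simp only [Fin.val_mk]; omega))
    · simp
  · have hnot : a ∉ p.parts := by
      intro hmem
      exact ha ⟨p.parts_pos hmem, hp a hmem⟩
    rw [Multiset.count_eq_zero_of_notMem hnot]
    apply Finset.sum_eq_zero
    intro j _
    rw [Multiset.count_replicate, if_neg (by omega)]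

/-- `c_{ω^{r+1}}(n)` equals the number of nonnegative integer solutions of
`(r+1)·l_r + ⋯ + 1·l_0 = n`, i.e. the number of partitions of `n` into parts
of size at most `r+1`. -/
theorem count_below_omega_pow_succ (N : Ordinal → ℕ) (hN : IsNorm N) (r n : ℕ) :
    {α : Ordinal | α < omega0 ^ ((r : Ordinal) + 1) ∧ N α = n}.ncard
        = {l : Fin (r + 1) → ℕ | ∑ i, (i.1 + 1) * l i = n}.ncard ∧
      {α : Ordinal | α < omega0 ^ ((r : Ordinal) + 1) ∧ N α = n}.ncard
        = {p : n.Partition | ∀ x ∈ p.parts, x ≤ r + 1}.ncard := by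
  -- equivalence between tuples and ordinals
  have e1 : {l : Fin (r + 1) → ℕ | ∑ i, (i.1 + 1) * l i = n} ≃
      {α : Ordinal | α < omega0 ^ ((r : Ordinal) + 1) ∧ N α = n} := by
    refine Equiv.ofBijective
      (fun l => ⟨pack r l.1, pack_lt r l.1, by rw [pack_N N hN]; exact l.2⟩) ⟨?_, ?_⟩
    · intro a b h
      exact Subtype.ext (pack_inj r _ _ (congrArg Subtype.val h))
    · rintro ⟨α, hα, hNα⟩
      obtain ⟨l, hl⟩ := pack_surj r α hα
      refine ⟨⟨l, ?_⟩, Subtype.ext hl⟩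
      show ∑ i, (i.1 + 1) * l i = n
      rw [← pack_N N hN r l, hl]
      exact hNα
  -- equivalence between tuples and partitions
  have e2 : {l : Fin (r + 1) → ℕ | ∑ i, (i.1 + 1) * l i = n} ≃
      {p : n.Partition | ∀ x ∈ p.parts, x ≤ r + 1} := by
    refine
      { toFun := fun l =>
          ⟨{ parts := ∑ j : Fin (r + 1), Multiset.replicate (l.1 j) (j.1 + 1)
             parts_pos := ?_
             parts_sum := ?_ }, ?_⟩
        invFun := fun p => ⟨fun i => p.1.parts.count (i.1 + 1), ?_⟩
        left_inv := ?_
        right_inv := ?_ }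
    · intro i hi
      rw [Multiset.mem_sum] at hi
      obtain ⟨j, _, hj⟩ := hi
      rw [Multiset.eq_of_mem_replicate hj]
      omega
    · rw [Multiset.sum_sum]
      simp only [Multiset.sum_replicate, _root_.smul_eq_mul]
      have := l.2
      simpa [mul_comm] using this
    · intro x hx
      rw [Multiset.mem_sum] at hx
      obtain ⟨j, _, hj⟩ := hx
      rw [Multiset.eq_of_mem_replicate hj]
      omega
    · have hsum : (∑ j : Fin (r + 1),
          Multiset.replicate (p.1.parts.count (j.1 + 1)) (j.1 + 1)).sum = p.1.parts.sum := by
        rw [multiset_eq_sum_replicate p.1 p.2]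
      rw [Multiset.sum_sum] at hsum
      simp only [Multiset.sum_replicate, _root_.smul_eq_mul, p.1.parts_sum] at hsum
      calc ∑ i : Fin (r + 1), (i.1 + 1) * p.1.parts.count (i.1 + 1)
          = ∑ i : Fin (r + 1), p.1.parts.count (i.1 + 1) * (i.1 + 1) := by
            exact Finset.sum_congr rfl fun i _ => mul_comm _ _
        _ = n := hsum
    · intro l
      apply Subtype.ext
      funext i
      exact count_pack_multiset l.1 i
    · intro p
      apply Subtype.ext
      apply Nat.Partition.ext
      exact multiset_eq_sum_replicate p.1 p.2
  constructor
  · rw [← Nat.card_coe_set_eq, ← Nat.card_coe_set_eq]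
    exact (Nat.card_congr e1).symm
  · rw [← Nat.card_coe_set_eq, ← Nat.card_coe_set_eq]
    exact Nat.card_congr (e1.symm.trans e2)
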